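/- For a smooth function v : ℝ → ℝ with bounded second derivative and a nonnegative kernel ρ_δ supported in (0,δ) with ∫₀^δ ρ_δ(s) ds = 1, the nonlocal derivative G_δ v(t) = ∫₀^δ (v(t) - v(t-s))/s · ρ_δ(s) ds satisfies |G_δ v(t) - v'(t)| ≤ (δ/2) · sup |v''|. -/

import Mathlib

open MeasureTheory Set

theorem nonlocal_derivative_approx (δ : ℝ) (hδ : 0 < δ) (ρ v : ℝ → ℝ) (M t : ℝ)
    (hρ_nonneg : ∀ s, 0 ≤ ρ s) (hρ_meas : Measurable ρ)
    (hρ_supp : ∀ s, s ∉ Set.Ioo 0 δ → ρ s = 0)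
    (hρ_int : IntegrableOn ρ (Set.Ioo 0 δ))
    (hρ_mass : ∫ s in Set.Ioo 0 δ, ρ s = 1)
    (hv : ContDiff ℝ 2 v)
    (hM : ∀ x, |deriv (deriv v) x| ≤ M) :
    |(∫ s in Set.Ioo 0 δ, (v t - v (t - s)) / s * ρ s) - deriv v t| ≤ δ / 2 * M := by
  set f := deriv v with hf
  have hM0 : 0 ≤ M := le_trans (abs_nonneg _) (hM 0)
  have hv1 : Differentiable ℝ v := hv.differentiable (by norm_num)
  have hf1 : ContDiff ℝ 1 f := by
    have h2 : ContDiff ℝ ((1 : ℕ) + 1) v := by exact_mod_cast hv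
    exact (contDiff_succ_iff_deriv.mp h2).2.2
  have hfdiff : Differentiable ℝ f := hf1.differentiable one_ne_zero
  have hfcont : Continuous f := hf1.continuous
  -- Lipschitz bound for f
  have hlip : ∀ u : ℝ, |f u - f t| ≤ M * |u - t| := by
    intro u
    have := convex_univ.norm_image_sub_le_of_norm_deriv_le (f := f) (C := M)
      (fun x _ => (hfdiff x)) (fun x _ => hM x) (mem_univ t) (mem_univ u)
    simpa using this
  -- pointwise estimate
  have hpt : ∀ s ∈ Set.Ioo (0:ℝ) δ, |(v t - v (t - s)) / s - f t| ≤ δ / 2 * M := by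
    intro s hs
    obtain ⟨hs0, hsδ⟩ := hs
    have hftc : ∫ u in (t - s)..t, f u = v t - v (t - s) :=
      intervalIntegral.integral_deriv_eq_sub (fun x _ => hv1 x)
        (hfcont.intervalIntegrable _ _)
    have hIint : IntervalIntegrable (fun u => f u - f t) MeasureTheory.volume (t - s) t :=
      (hfcont.sub continuous_const).intervalIntegrable _ _
    have hkey : ∫ u in (t - s)..t, (f u - f t) = (v t - v (t - s)) - s * f t := by
      rw [intervalIntegral.integral_sub (hfcont.intervalIntegrable _ _)
        (intervalIntegrable_const), hftc, intervalIntegral.integral_const]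
      simp [smul_eq_mul]
    have hbound : |∫ u in (t - s)..t, (f u - f t)| ≤ M * (s ^ 2 / 2) := by
      have h1 : ∀ᵐ u ∂(MeasureTheory.volume.restrict (Set.uIoc (t - s) t)),
          ‖f u - f t‖ ≤ M * (t - u) := by
        filter_upwards [MeasureTheory.ae_restrict_mem measurableSet_uIoc] with u hu
        rw [Set.uIoc_of_le (by linarith)] at hu
        have : |u - t| = t - u := by rw [abs_sub_comm]; exact abs_of_nonneg (by linarith [hu.2])
        calc ‖f u - f t‖ = |f u - f t| := rfl
          _ ≤ M * |u - t| := hlip u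
          _ = M * (t - u) := by rw [this]
      have h2 : IntervalIntegrable (fun u => M * (t - u)) MeasureTheory.volume (t - s) t :=
        ((continuous_const.mul (continuous_const.sub continuous_id)).intervalIntegrable _ _)
      have h3 := intervalIntegral.norm_integral_le_abs_of_norm_le h1 h2
      have h4 : ∫ u in (t - s)..t, M * (t - u) = M * (s ^ 2 / 2) := by
        rw [intervalIntegral.integral_const_mul]
        have : ∫ u in (t - s)..t, (t - u) = s ^ 2 / 2 := by
          rw [intervalIntegral.integral_sub intervalIntegrable_const
            (intervalIntegral.intervalIntegrable_id), intervalIntegral.integral_const,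
            integral_id]
          simp [smul_eq_mul]; ring
        rw [this]
      rw [h4] at h3
      calc |∫ u in (t - s)..t, (f u - f t)| ≤ |M * (s ^ 2 / 2)| := h3
        _ = M * (s ^ 2 / 2) := abs_of_nonneg (by positivity)
    have hdiv : (v t - v (t - s)) / s - f t = (∫ u in (t - s)..t, (f u - f t)) / s := by
      rw [hkey]; field_simp
    rw [hdiv, abs_div, abs_of_pos hs0]
    rw [div_le_iff₀ hs0]
    calc |∫ u in (t - s)..t, (f u - f t)| ≤ M * (s ^ 2 / 2) := hbound
      _ ≤ δ / 2 * M * s := by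
          nlinarith [mul_nonneg (mul_nonneg hM0 hs0.le) (sub_nonneg.mpr hsδ.le)]
  -- integrability
  have hmeas_g : AEStronglyMeasurable (fun s : ℝ => ((v t - v (t - s)) / s - f t) * ρ s)
      (MeasureTheory.volume.restrict (Set.Ioo 0 δ)) := by
    apply Measurable.aestronglyMeasurable
    exact (((measurable_const.sub ((hv.continuous.measurable).comp
      (measurable_const.sub measurable_id))).div measurable_id).sub measurable_const).mul hρ_meas
  have hint_g : IntegrableOn (fun s : ℝ => ((v t - v (t - s)) / s - f t) * ρ s)
      (Set.Ioo 0 δ) := by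
    apply MeasureTheory.Integrable.mono' (hρ_int.const_mul (δ / 2 * M)) hmeas_g
    filter_upwards [MeasureTheory.ae_restrict_mem measurableSet_Ioo] with s hs
    rw [Real.norm_eq_abs, abs_mul, abs_of_nonneg (hρ_nonneg s)]
    exact mul_le_mul_of_nonneg_right (hpt s hs) (hρ_nonneg s)
  have hint_g1 : IntegrableOn (fun s : ℝ => (v t - v (t - s)) / s * ρ s) (Set.Ioo 0 δ) := by
    have : (fun s : ℝ => (v t - v (t - s)) / s * ρ s)
        = fun s => ((v t - v (t - s)) / s - f t) * ρ s + f t * ρ s := by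
      funext s; ring
    rw [this]
    exact hint_g.add (hρ_int.const_mul (f t))
  -- main computation
  have hsplit : ∫ s in Set.Ioo 0 δ, ((v t - v (t - s)) / s - f t) * ρ s
      = (∫ s in Set.Ioo 0 δ, (v t - v (t - s)) / s * ρ s) - f t := by
    have he : (fun s : ℝ => ((v t - v (t - s)) / s - f t) * ρ s)
        = fun s => (v t - v (t - s)) / s * ρ s - f t * ρ s := by funext s; ring
    rw [he, MeasureTheory.integral_sub hint_g1 (hρ_int.const_mul (f t)),
      MeasureTheory.integral_const_mul, hρ_mass, mul_one]
  rw [← hsplit]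
  calc |∫ s in Set.Ioo 0 δ, ((v t - v (t - s)) / s - f t) * ρ s|
      ≤ ∫ s in Set.Ioo 0 δ, |((v t - v (t - s)) / s - f t) * ρ s| := by
        simpa only [Real.norm_eq_abs] using
          MeasureTheory.norm_integral_le_integral_norm
            (fun s : ℝ => ((v t - v (t - s)) / s - f t) * ρ s) (μ := MeasureTheory.volume.restrict (Set.Ioo 0 δ))
    _ ≤ ∫ s in Set.Ioo 0 δ, (δ / 2 * M) * ρ s := by
        apply MeasureTheory.setIntegral_mono_on hint_g.abs (hρ_int.const_mul _) measurableSet_Ioo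
        intro s hs
        rw [abs_mul, abs_of_nonneg (hρ_nonneg s)]
        exact mul_le_mul_of_nonneg_right (hpt s hs) (hρ_nonneg s)
    _ = δ / 2 * M := by rw [MeasureTheory.integral_const_mul, hρ_mass, mul_one]
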